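/- Let $n \ge 2$ and $1 \le m \le n-1$ be integers, let $E = $ EuclideanSpace $\mathbb{R}$ (Fin $n$) be $\mathbb{R}^n$ with its standard inner product, and let $R : E \times E \times E \times E \to \mathbb{R}$ be multilinear with $R(x,y,z,w) = -R(y,x,z,w)$ and $R(x,y,z,w) = R(z,w,x,y)$ for all $x,y,z,w \in E$. If $(e_1,\dots,e_n)$ and $(f_1,\dots,f_n)$ are two orthonormal bases of $E$ such that $\mathrm{span}\{e_1,\dots,e_m\} = \mathrm{span}\{f_1,\dots,f_m\}$, then $$\sum_{p=1}^m \sum_{q=p+1}^n R(e_p,e_q,e_p,e_q) \; = \; \sum_{p=1}^m \sum_{q=p+1}^n R(f_p,f_q,f_p,f_q).$$ -/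

import Mathlib

open Finset

/-- If `r ∉ S`, then `b r` is orthogonal to the span of `b '' S`. -/
lemma aux_inner_zero {n : ℕ} (b : OrthonormalBasis (Fin n) ℝ (EuclideanSpace ℝ (Fin n)))
    (S : Set (Fin n)) {r : Fin n} (hr : r ∉ S) {v : EuclideanSpace ℝ (Fin n)}
    (hv : v ∈ Submodule.span ℝ (⇑b '' S)) :
    (inner ℝ (b r) v : ℝ) = 0 := by
  induction hv using Submodule.span_induction with
  | mem w hw =>
    obtain ⟨s, hs, rfl⟩ := hw
    exact b.orthonormal.2 (fun h => hr (h ▸ hs))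
  | zero => simp
  | add x y _ _ hx hy => simp [inner_add_right, hx, hy]
  | smul c x _ hx => simp [inner_smul_right, hx]

/-- Invariance of a "trace"-type sum of a bilinear form under change of orthonormal system. -/
lemma tr_eq {n : ℕ} (L : EuclideanSpace ℝ (Fin n) →ₗ[ℝ] EuclideanSpace ℝ (Fin n) →ₗ[ℝ] ℝ)
    (g h : Fin n → EuclideanSpace ℝ (Fin n)) (s : Finset (Fin n))
    (H1 : ∀ p ∈ s, g p = ∑ r ∈ s, (inner ℝ (h r) (g p) : ℝ) • h r)
    (H2 : ∀ r ∈ s, ∀ t ∈ s, ∑ p ∈ s, (inner ℝ (h r) (g p) : ℝ) * (inner ℝ (h t) (g p) : ℝ)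
      = if r = t then (1:ℝ) else 0) :
    ∑ p ∈ s, L (g p) (g p) = ∑ r ∈ s, L (h r) (h r) := by
  have key : ∀ p ∈ s, L (g p) (g p)
      = ∑ r ∈ s, ∑ t ∈ s, ((inner ℝ (h r) (g p) : ℝ) * (inner ℝ (h t) (g p) : ℝ)) * L (h t) (h r) := by
    intro p hp
    conv_lhs => rw [H1 p hp]
    simp only [map_sum, map_smul, LinearMap.sum_apply, LinearMap.smul_apply, smul_eq_mul,
      Finset.mul_sum]
    exact Finset.sum_congr rfl fun r _ => Finset.sum_congr rfl fun t _ => by ring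
  rw [Finset.sum_congr rfl key, Finset.sum_comm]
  refine Finset.sum_congr rfl fun r hr => ?_
  rw [Finset.sum_comm]
  have h2 : ∀ t ∈ s, ∑ p ∈ s, ((inner ℝ (h r) (g p) : ℝ) * (inner ℝ (h t) (g p) : ℝ)) * L (h t) (h r)
      = (if r = t then (1:ℝ) else 0) * L (h t) (h r) := by
    intro t ht
    rw [← Finset.sum_mul, H2 r hr t ht]
  rw [Finset.sum_congr rfl h2]
  simp [Finset.sum_ite_eq, hr]

lemma tr_eq4_right {n : ℕ}
    (R : EuclideanSpace ℝ (Fin n) →ₗ[ℝ] EuclideanSpace ℝ (Fin n) →ₗ[ℝ]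
          EuclideanSpace ℝ (Fin n) →ₗ[ℝ] EuclideanSpace ℝ (Fin n) →ₗ[ℝ] ℝ)
    (a : EuclideanSpace ℝ (Fin n)) (g h : Fin n → EuclideanSpace ℝ (Fin n)) (s : Finset (Fin n))
    (H1 : ∀ p ∈ s, g p = ∑ r ∈ s, (inner ℝ (h r) (g p) : ℝ) • h r)
    (H2 : ∀ r ∈ s, ∀ t ∈ s, ∑ p ∈ s, (inner ℝ (h r) (g p) : ℝ) * (inner ℝ (h t) (g p) : ℝ)
      = if r = t then (1:ℝ) else 0) :
    ∑ q ∈ s, R a (g q) a (g q) = ∑ q ∈ s, R a (h q) a (h q) := by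
  have := tr_eq (LinearMap.mk₂ ℝ (fun y z => R a y a z)
    (fun y₁ y₂ z => by simp) (fun c y z => by simp)
    (fun y z₁ z₂ => by simp) (fun c y z => by simp)) g h s H1 H2
  simpa using this

lemma tr_eq4_left {n : ℕ}
    (R : EuclideanSpace ℝ (Fin n) →ₗ[ℝ] EuclideanSpace ℝ (Fin n) →ₗ[ℝ]
          EuclideanSpace ℝ (Fin n) →ₗ[ℝ] EuclideanSpace ℝ (Fin n) →ₗ[ℝ] ℝ)
    (b : EuclideanSpace ℝ (Fin n)) (g h : Fin n → EuclideanSpace ℝ (Fin n)) (s : Finset (Fin n))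
    (H1 : ∀ p ∈ s, g p = ∑ r ∈ s, (inner ℝ (h r) (g p) : ℝ) • h r)
    (H2 : ∀ r ∈ s, ∀ t ∈ s, ∑ p ∈ s, (inner ℝ (h r) (g p) : ℝ) * (inner ℝ (h t) (g p) : ℝ)
      = if r = t then (1:ℝ) else 0) :
    ∑ p ∈ s, R (g p) b (g p) b = ∑ p ∈ s, R (h p) b (h p) b := by
  have := tr_eq (LinearMap.mk₂ ℝ (fun x z => R x b z b)
    (fun x₁ x₂ z => by simp) (fun c x z => by simp)
    (fun x z₁ z₂ => by simp) (fun c x z => by simp)) g h s H1 H2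
  simpa using this

/-- Pure combinatorics: for a symmetric function vanishing on the diagonal,
the intermediate-curvature-type sum is a combination of two "trace"-type sums. -/
lemma comb_sum {n m : ℕ} (g : Fin n → Fin n → ℝ)
    (hs : ∀ p q, g p q = g q p) (hd : ∀ p, g p p = 0) :
    2 * (∑ p ∈ Finset.univ.filter (fun p : Fin n => (p : ℕ) < m),
          ∑ q ∈ Finset.univ.filter (fun q : Fin n => p < q), g p q)
    = 2 * (∑ p ∈ Finset.univ.filter (fun p : Fin n => (p : ℕ) < m), ∑ q, g p q)
      - ∑ p ∈ Finset.univ.filter (fun p : Fin n => (p : ℕ) < m),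
          ∑ q ∈ Finset.univ.filter (fun q : Fin n => (q : ℕ) < m), g p q := by
  classical
  set M : Finset (Fin n) := Finset.univ.filter (fun p : Fin n => (p : ℕ) < m) with hM
  have hmemM : ∀ p : Fin n, p ∈ M ↔ (p : ℕ) < m := by
    intro p; simp [hM]
  have splitp : ∀ p : Fin n, ∑ q, g p q
      = (∑ q ∈ Finset.univ.filter (fun q => p < q), g p q)
        + ∑ q ∈ Finset.univ.filter (fun q => q < p), g p q := by
    intro p
    rw [← Finset.sum_filter_add_sum_filter_not Finset.univ (fun q => p < q) (g p)]
    congr 1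
    have hins : Finset.univ.filter (fun q : Fin n => ¬ p < q)
        = insert p (Finset.univ.filter (fun q => q < p)) := by
      ext q
      simp only [mem_filter, mem_univ, true_and, mem_insert, not_lt, Fin.le_def, Fin.lt_def,
        Fin.ext_iff]
      omega
    rw [hins, Finset.sum_insert (by simp), hd p, zero_add]
  have lowM : ∀ p ∈ M, ∑ q ∈ Finset.univ.filter (fun q => q < p), g p q
      = ∑ q ∈ M.filter (fun q => q < p), g p q := by
    intro p hp
    have hpm : (p : ℕ) < m := (hmemM p).1 hp
    apply Finset.sum_congr ?_ (fun _ _ => rfl)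
    ext q
    simp only [hM, mem_filter, mem_univ, true_and, Fin.lt_def]
    omega
  have h1 : ∑ p ∈ M, ∑ q, g p q
      = (∑ p ∈ M, ∑ q ∈ Finset.univ.filter (fun q => p < q), g p q)
        + ∑ p ∈ M, ∑ q ∈ M.filter (fun q => q < p), g p q := by
    rw [← Finset.sum_add_distrib]
    exact Finset.sum_congr rfl fun p hp => by rw [splitp p, lowM p hp]
  have sw : ∑ p ∈ M, ∑ q ∈ M.filter (fun q => q < p), g p q
      = ∑ p ∈ M, ∑ q ∈ M.filter (fun q => p < q), g p q := by
    simp only [Finset.sum_filter]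
    rw [Finset.sum_comm]
    exact Finset.sum_congr rfl fun p _ => Finset.sum_congr rfl fun q _ => by
      by_cases h : p < q <;> simp [h, hs q p]
  have splitM : ∑ p ∈ M, ∑ q ∈ M, g p q
      = (∑ p ∈ M, ∑ q ∈ M.filter (fun q => p < q), g p q)
        + ∑ p ∈ M, ∑ q ∈ M.filter (fun q => q < p), g p q := by
    rw [← Finset.sum_add_distrib]
    refine Finset.sum_congr rfl fun p hp => ?_
    rw [← Finset.sum_filter_add_sum_filter_not M (fun q => p < q) (g p)]
    congr 1
    have hpm : (p : ℕ) < m := (hmemM p).1 hp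
    have hins : M.filter (fun q : Fin n => ¬ p < q)
        = insert p (M.filter (fun q => q < p)) := by
      ext q
      simp only [hM, mem_filter, mem_univ, true_and, mem_insert, not_lt, Fin.le_def, Fin.lt_def,
        Fin.ext_iff]
      omega
    rw [hins, Finset.sum_insert (by simp), hd p, zero_add]
  linarith [h1, sw, splitM]

/-- The `m`-intermediate curvature `𝒞_m(e_1, …, e_m)` of an algebraic
curvature-like tensor depends only on the span of the first `m` basis vectors. -/
theorem stmt_13 (n m : ℕ) (hn : 2 ≤ n) (hm1 : 1 ≤ m) (hmn : m ≤ n - 1)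
    (R : EuclideanSpace ℝ (Fin n) →ₗ[ℝ] EuclideanSpace ℝ (Fin n) →ₗ[ℝ]
          EuclideanSpace ℝ (Fin n) →ₗ[ℝ] EuclideanSpace ℝ (Fin n) →ₗ[ℝ] ℝ)
    (hanti : ∀ x y z w, R x y z w = - R y x z w)
    (hpair : ∀ x y z w, R x y z w = R z w x y)
    (e f : OrthonormalBasis (Fin n) ℝ (EuclideanSpace ℝ (Fin n)))
    (hspan : Submodule.span ℝ (⇑e '' {p : Fin n | (p : ℕ) < m})
      = Submodule.span ℝ (⇑f '' {p : Fin n | (p : ℕ) < m})) :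
    ∑ p ∈ Finset.univ.filter (fun p : Fin n => (p : ℕ) < m),
      ∑ q ∈ Finset.univ.filter (fun q : Fin n => p < q), R (e p) (e q) (e p) (e q)
    = ∑ p ∈ Finset.univ.filter (fun p : Fin n => (p : ℕ) < m),
      ∑ q ∈ Finset.univ.filter (fun q : Fin n => p < q), R (f p) (f q) (f p) (f q) := by
  classical
  set M : Finset (Fin n) := Finset.univ.filter (fun p : Fin n => (p : ℕ) < m) with hM
  have hmemM : ∀ p : Fin n, p ∈ M ↔ (p : ℕ) < m := by
    intro p; simp [hM]
  have heV : ∀ p ∈ M, e p ∈ Submodule.span ℝ (⇑f '' {q : Fin n | (q : ℕ) < m}) := by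
    intro p hp
    rw [← hspan]
    exact Submodule.subset_span (Set.mem_image_of_mem _ ((hmemM p).1 hp))
  have hfV : ∀ r ∈ M, f r ∈ Submodule.span ℝ (⇑e '' {q : Fin n | (q : ℕ) < m}) := by
    intro r hr
    rw [hspan]
    exact Submodule.subset_span (Set.mem_image_of_mem _ ((hmemM r).1 hr))
  -- expansion / orthogonality for the full basis
  have H1u : ∀ p ∈ (Finset.univ : Finset (Fin n)),
      e p = ∑ r, (inner ℝ (f r) (e p) : ℝ) • f r :=
    fun p _ => (f.sum_repr' (e p)).symm
  have H2u : ∀ r ∈ (Finset.univ : Finset (Fin n)), ∀ t ∈ (Finset.univ : Finset (Fin n)),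
      ∑ p, (inner ℝ (f r) (e p) : ℝ) * (inner ℝ (f t) (e p) : ℝ) = if r = t then (1:ℝ) else 0 := by
    intro r _ t _
    have h := e.sum_inner_mul_inner (f r) (f t)
    rw [← orthonormal_iff_ite.mp f.orthonormal r t, ← h]
    exact Finset.sum_congr rfl fun p _ => by rw [real_inner_comm (f t) (e p)]
  -- expansion / orthogonality for the sub-bases of the common span
  have H1M : ∀ p ∈ M, e p = ∑ r ∈ M, (inner ℝ (f r) (e p) : ℝ) • f r := by
    intro p hp
    conv_lhs => rw [← f.sum_repr' (e p)]
    refine (Finset.sum_subset (Finset.subset_univ M) fun r _ hrM => ?_).symm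
    have hrS : r ∉ {q : Fin n | (q : ℕ) < m} := fun h => hrM ((hmemM r).2 h)
    rw [aux_inner_zero f _ hrS (heV p hp), zero_smul]
  have H2M : ∀ r ∈ M, ∀ t ∈ M,
      ∑ p ∈ M, (inner ℝ (f r) (e p) : ℝ) * (inner ℝ (f t) (e p) : ℝ)
        = if r = t then (1:ℝ) else 0 := by
    intro r hr t ht
    rw [← H2u r (Finset.mem_univ r) t (Finset.mem_univ t)]
    refine Finset.sum_subset (Finset.subset_univ M) fun p _ hpM => ?_
    have hpS : p ∉ {q : Fin n | (q : ℕ) < m} := fun h => hpM ((hmemM p).2 h)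
    rw [real_inner_comm (e p) (f r), aux_inner_zero e _ hpS (hfV r hr), zero_mul]
  -- invariance of the full-trace sum
  have hT : ∑ p ∈ M, ∑ q, R (e p) (e q) (e p) (e q)
      = ∑ p ∈ M, ∑ q, R (f p) (f q) (f p) (f q) :=
    calc ∑ p ∈ M, ∑ q, R (e p) (e q) (e p) (e q)
        = ∑ p ∈ M, ∑ q, R (e p) (f q) (e p) (f q) :=
          Finset.sum_congr rfl fun p _ => tr_eq4_right R (e p) e f Finset.univ H1u H2u
      _ = ∑ q, ∑ p ∈ M, R (e p) (f q) (e p) (f q) := Finset.sum_comm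
      _ = ∑ q, ∑ p ∈ M, R (f p) (f q) (f p) (f q) :=
          Finset.sum_congr rfl fun q _ => tr_eq4_left R (f q) e f M H1M H2M
      _ = ∑ p ∈ M, ∑ q, R (f p) (f q) (f p) (f q) := Finset.sum_comm
  -- invariance of the double-trace sum over the common span
  have hD : ∑ p ∈ M, ∑ q ∈ M, R (e p) (e q) (e p) (e q)
      = ∑ p ∈ M, ∑ q ∈ M, R (f p) (f q) (f p) (f q) :=
    calc ∑ p ∈ M, ∑ q ∈ M, R (e p) (e q) (e p) (e q)
        = ∑ p ∈ M, ∑ q ∈ M, R (e p) (f q) (e p) (f q) :=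
          Finset.sum_congr rfl fun p _ => tr_eq4_right R (e p) e f M H1M H2M
      _ = ∑ q ∈ M, ∑ p ∈ M, R (e p) (f q) (e p) (f q) := Finset.sum_comm
      _ = ∑ q ∈ M, ∑ p ∈ M, R (f p) (f q) (f p) (f q) :=
          Finset.sum_congr rfl fun q _ => tr_eq4_left R (f q) e f M H1M H2M
      _ = ∑ p ∈ M, ∑ q ∈ M, R (f p) (f q) (f p) (f q) := Finset.sum_comm
  -- symmetry and vanishing of the diagonal
  have Ksymm : ∀ x y : EuclideanSpace ℝ (Fin n), R x y x y = R y x y x := by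
    intro x y
    have h1 : R y x y x = - R x y y x := hanti y x y x
    have h2 : R x y y x = R y x x y := hpair x y y x
    have h3 : R y x x y = - R x y x y := hanti y x x y
    linarith
  have Kdiag : ∀ x : EuclideanSpace ℝ (Fin n), R x x x x = 0 := by
    intro x
    have := hanti x x x x
    linarith
  have comb_e : 2 * (∑ p ∈ M, ∑ q ∈ Finset.univ.filter (fun q : Fin n => p < q),
        R (e p) (e q) (e p) (e q))
      = 2 * (∑ p ∈ M, ∑ q, R (e p) (e q) (e p) (e q))
        - ∑ p ∈ M, ∑ q ∈ M, R (e p) (e q) (e p) (e q) :=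
    comb_sum (fun p q => R (e p) (e q) (e p) (e q))
      (fun p q => Ksymm (e p) (e q)) (fun p => Kdiag (e p))
  have comb_f : 2 * (∑ p ∈ M, ∑ q ∈ Finset.univ.filter (fun q : Fin n => p < q),
        R (f p) (f q) (f p) (f q))
      = 2 * (∑ p ∈ M, ∑ q, R (f p) (f q) (f p) (f q))
        - ∑ p ∈ M, ∑ q ∈ M, R (f p) (f q) (f p) (f q) :=
    comb_sum (fun p q => R (f p) (f q) (f p) (f q))
      (fun p q => Ksymm (f p) (f q)) (fun p => Kdiag (f p))
  linarith [comb_e, comb_f, hT, hD]
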